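/- Let S ⊆ {0,...,2^b - 1} be nonempty below y, and let t be the first node on the path from the leaf with key y to the root whose left child has bit 1 and is not on this path. Then starting from that left child and repeatedly descending to the rightmost child with bit 1, one reaches the leaf whose key is the predecessor of y in S (the largest element of S strictly less than y). -/

import Mathlib

private lemma trie_halve (a b j : ℕ) (h : j < b) :
    a / 2 ^ (b - (j + 1)) / 2 = a / 2 ^ (b - j) := by
  rw [Nat.div_div_eq_div_mul, ← pow_succ]
  congr 2
  omega


/-- Let `S ⊆ {0,...,2^b-1}` be nonempty below `y`.  Nodes at depth `j` are encoded as natural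
numbers (`y`'s ancestor at depth `j` is `y / 2^(b-j)`), and the bit of node `z` at depth `j`
is 1 iff `z` is the length-`j` prefix of some key of `S`.  Let the node at depth `i` be the
first node on the path from the leaf with key `y` to the root (i.e. the deepest such node)
whose left child `c = 2 * (y / 2^(b-i))` has bit 1 and is not on this path.  If `z`
describes the descent that starts from `c` and repeatedly moves to the rightmost child with
bit 1 (right child if it has bit 1, otherwise left child), then the leaf reached,
`z (b - (i+1))`, is the predecessor of `y` in `S`: it is in `S`, is less than `y`, and every
key of `S` below `y` is at most it. -/
theorem binary_trie_pred_descent (b : ℕ) (S : Finset ℕ) (hS : ∀ k ∈ S, k < 2 ^ b)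
    (y : ℕ) (hy : y < 2 ^ b)
    (hne : ∃ k ∈ S, k < y)
    (i : ℕ) (hib : i < b)
    (c : ℕ) (hc : c = 2 * (y / 2 ^ (b - i)))
    (hbit : ∃ k ∈ S, k / 2 ^ (b - (i + 1)) = c)
    (hnotpath : y / 2 ^ (b - (i + 1)) ≠ c)
    (hfirst : ∀ j, i < j → j < b →
      ¬ ((∃ k ∈ S, k / 2 ^ (b - (j + 1)) = 2 * (y / 2 ^ (b - j))) ∧
         y / 2 ^ (b - (j + 1)) ≠ 2 * (y / 2 ^ (b - j))))
    (z : ℕ → ℕ) (hz0 : z 0 = c)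
    (hzstep : ∀ m, i + 1 + m < b →
      ((∃ k ∈ S, k / 2 ^ (b - (i + 1 + m + 1)) = 2 * z m + 1) → z (m + 1) = 2 * z m + 1) ∧
      (¬ (∃ k ∈ S, k / 2 ^ (b - (i + 1 + m + 1)) = 2 * z m + 1) → z (m + 1) = 2 * z m)) :
    z (b - (i + 1)) ∈ S ∧ z (b - (i + 1)) < y ∧
      ∀ k ∈ S, k < y → k ≤ z (b - (i + 1)) := by
  classical
  have hib1 : i + 1 ≤ b := hib
  set T : Finset ℕ := S.filter (fun k => k / 2 ^ (b - (i + 1)) = c) with hT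
  have hTne : T.Nonempty := by
    obtain ⟨k, hk, hke⟩ := hbit
    exact ⟨k, Finset.mem_filter.mpr ⟨hk, hke⟩⟩
  set P := T.max' hTne with hP
  have hPT : P ∈ T := T.max'_mem hTne
  have hPS : P ∈ S := (Finset.mem_filter.mp hPT).1
  have hPc : P / 2 ^ (b - (i + 1)) = c := (Finset.mem_filter.mp hPT).2
  have hPmax : ∀ k ∈ S, k / 2 ^ (b - (i + 1)) = c → k ≤ P := fun k hk hke =>
    T.le_max' k (Finset.mem_filter.mpr ⟨hk, hke⟩)
  -- the descent follows the prefixes of P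
  have key : ∀ m, m ≤ b - (i + 1) → z m = P / 2 ^ (b - (i + 1 + m)) := by
    intro m
    induction m with
    | zero =>
      intro _
      rw [hz0]
      have : b - (i + 1 + 0) = b - (i + 1) := by omega
      rw [this, hPc]
    | succ m ih =>
      intro hm
      have hd : i + 1 + m < b := by omega
      have hzm := ih (by omega)
      have hidx : i + 1 + (m + 1) = i + 1 + m + 1 := by omega
      rw [hidx]
      set u := P / 2 ^ (b - (i + 1 + m)) with hu
      have hPhalf : P / 2 ^ (b - (i + 1 + m + 1)) / 2 = u := trie_halve P b (i + 1 + m) hd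
      have hu2 : u / 2 ^ m = c := by
        rw [hu, Nat.div_div_eq_div_mul, ← pow_add]
        have : b - (i + 1 + m) + m = b - (i + 1) := by omega
        rw [this, hPc]
      by_cases hcase : ∃ k ∈ S, k / 2 ^ (b - (i + 1 + m + 1)) = 2 * z m + 1
      · have hz1 : z (m + 1) = 2 * z m + 1 := (hzstep m hd).1 hcase
        obtain ⟨k, hkS, hke⟩ := hcase
        rw [hzm] at hke
        -- k has prefix c at depth i+1
        have hkc : k / 2 ^ (b - (i + 1)) = c := by
          have h1 : k / 2 ^ (b - (i + 1 + m + 1)) / 2 ^ (m + 1) = k / 2 ^ (b - (i + 1)) := by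
            rw [Nat.div_div_eq_div_mul, ← pow_add]
            have : b - (i + 1 + m + 1) + (m + 1) = b - (i + 1) := by omega
            rw [this]
          have h2 : (2 * u + 1) / 2 ^ (m + 1) = u / 2 ^ m := by
            rw [pow_succ', ← Nat.div_div_eq_div_mul]
            have : (2 * u + 1) / 2 = u := by omega
            rw [this]
          rw [← h1, hke, h2, hu2]
        have hkP : k ≤ P := hPmax k hkS hkc
        have hle : k / 2 ^ (b - (i + 1 + m + 1)) ≤ P / 2 ^ (b - (i + 1 + m + 1)) :=
          Nat.div_le_div_right hkP
        rw [hz1, hzm]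
        omega
      · have hz1 : z (m + 1) = 2 * z m := (hzstep m hd).2 hcase
        rw [hz1, hzm]
        rcases (by omega : P / 2 ^ (b - (i + 1 + m + 1)) = 2 * u ∨
            P / 2 ^ (b - (i + 1 + m + 1)) = 2 * u + 1) with h | h
        · omega
        · exfalso
          exact hcase ⟨P, hPS, by rw [hzm]; exact h⟩
  have hPz : z (b - (i + 1)) = P := by
    have h := key (b - (i + 1)) le_rfl
    have h2 : b - (i + 1 + (b - (i + 1))) = 0 := by omega
    rw [h2] at h
    simpa using h
  -- y's ancestor at depth i+1 is c+1
  have hyhalf : y / 2 ^ (b - (i + 1)) / 2 = y / 2 ^ (b - i) := trie_halve y b i hib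
  have hyc : y / 2 ^ (b - (i + 1)) = c + 1 := by omega
  have hPy : P < y := by
    by_contra h
    push_neg at h
    have := Nat.div_le_div_right (c := 2 ^ (b - (i + 1))) h
    omega
  refine ⟨hPz ▸ hPS, hPz ▸ hPy, ?_⟩
  rw [hPz]
  intro k hkS hky
  by_cases h1 : k / 2 ^ (b - (i + 1)) = c
  · exact hPmax k hkS h1
  · rcases lt_trichotomy (k / 2 ^ (b - i)) (y / 2 ^ (b - i)) with hlt | heq | hgt
    · -- k lies strictly below the subtree of c: k < (y/2^(b-i)) * 2^(b-i) ≤ P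
      have hk_lt : k < y / 2 ^ (b - i) * 2 ^ (b - i) :=
        (Nat.div_lt_iff_lt_mul (Nat.pow_pos (by norm_num))).mp hlt
      have hPge : c * 2 ^ (b - (i + 1)) ≤ P := by
        calc c * 2 ^ (b - (i + 1)) = P / 2 ^ (b - (i + 1)) * 2 ^ (b - (i + 1)) := by rw [hPc]
        _ ≤ P := Nat.div_mul_le_self _ _
      have hpow : 2 ^ (b - i) = 2 * 2 ^ (b - (i + 1)) := by
        rw [← pow_succ']
        congr 1
        omega
      have hcalc : y / 2 ^ (b - i) * 2 ^ (b - i) = c * 2 ^ (b - (i + 1)) := by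
        rw [hc, hpow]
        ring
      omega
    · -- k shares y's ancestor at depth i+1; impossible since i is deepest such branch
      exfalso
      have hkhalf : k / 2 ^ (b - (i + 1)) / 2 = k / 2 ^ (b - i) := trie_halve k b i hib
      have hQi1 : k / 2 ^ (b - (i + 1)) = y / 2 ^ (b - (i + 1)) := by omega
      obtain ⟨j, hjge, hjb, hQj, hnQ⟩ :
          ∃ j, i + 1 ≤ j ∧ j < b ∧ k / 2 ^ (b - j) = y / 2 ^ (b - j) ∧
            k / 2 ^ (b - (j + 1)) ≠ y / 2 ^ (b - (j + 1)) := by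
        set Q : ℕ → Prop := fun j => k / 2 ^ (b - j) = y / 2 ^ (b - j) with hQdef
        have h1 : i + 1 ≤ Nat.findGreatest Q b := Nat.le_findGreatest hib1 hQi1
        have h2 : Q (Nat.findGreatest Q b) := Nat.findGreatest_spec hib1 hQi1
        have h3 : Nat.findGreatest Q b ≤ b := Nat.findGreatest_le b
        have h4 : Nat.findGreatest Q b < b := by
          rcases eq_or_lt_of_le h3 with h | h
          · exfalso
            rw [h, hQdef] at h2
            simp only [Nat.sub_self, pow_zero, Nat.div_one] at h2
            omega
          · exact h
        exact ⟨Nat.findGreatest Q b, h1, h4, h2,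
          Nat.findGreatest_is_greatest (P := Q) (n := b) (by omega) (by omega)⟩
      have hk2 : k / 2 ^ (b - (j + 1)) / 2 = k / 2 ^ (b - j) := trie_halve k b j hjb
      have hy2 : y / 2 ^ (b - (j + 1)) / 2 = y / 2 ^ (b - j) := trie_halve y b j hjb
      have hle : k / 2 ^ (b - (j + 1)) ≤ y / 2 ^ (b - (j + 1)) := Nat.div_le_div_right hky.le
      have hkval : k / 2 ^ (b - (j + 1)) = 2 * (y / 2 ^ (b - j)) := by omega
      exact hfirst j (by omega) hjb ⟨⟨k, hkS, hkval⟩, by omega⟩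
    · -- k's ancestor at depth i is larger than y's: then k > y, contradiction
      exfalso
      have hy_lt : y < (y / 2 ^ (b - i) + 1) * 2 ^ (b - i) :=
        (Nat.div_lt_iff_lt_mul (Nat.pow_pos (by norm_num))).mp (by omega)
      have hk_ge : (y / 2 ^ (b - i) + 1) * 2 ^ (b - i) ≤ k := by
        calc (y / 2 ^ (b - i) + 1) * 2 ^ (b - i) ≤ k / 2 ^ (b - i) * 2 ^ (b - i) :=
          Nat.mul_le_mul_right _ (by omega)
        _ ≤ k := Nat.div_mul_le_self _ _
      omega
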